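/- Let M be a real symmetric n×n matrix indexed by the vertices of a connected graph G with exactly one negative eigenvalue of multiplicity one, negative entries on edges and zero elsewhere off-diagonal. If x ∈ ker(M) is nonzero and G[supp_+(x)] is disconnected, then for every connected component C of G[supp(x)], N(C) = N(supp(x)), and there is no edge of G between supp_+(x) and supp_-(x). -/

import Mathlib

open Matrix Set

variable {V : Type*} [Fintype V] [DecidableEq V]

/-- Positive support of a vector. -/
def posSupp (x : V → ℝ) : Set V := {v | 0 < x v}

/-- Negative support of a vector. -/
def negSupp (x : V → ℝ) : Set V := {v | x v < 0}

/-- Support of a vector. -/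
def supp (x : V → ℝ) : Set V := {v | x v ≠ 0}

/-- External neighborhood of a set of vertices. -/
def nbhd (G : SimpleGraph V) (S : Set V) : Set V := {v | v ∉ S ∧ ∃ u ∈ S, G.Adj u v}

/-- Number of connected components of the subgraph induced by `S`. -/
noncomputable def compCount (G : SimpleGraph V) (S : Set V) : ℕ :=
  Nat.card (G.induce S).ConnectedComponent

/-- `C` is (the vertex set of) a connected component of the subgraph induced by `S`. -/
def IsComponentOf (G : SimpleGraph V) (S C : Set V) : Prop :=
  ∃ K : (G.induce S).ConnectedComponent, C = Subtype.val '' K.supp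

/-- `M ∈ M(G)`: a real symmetric matrix with exactly one negative eigenvalue
(counted with multiplicity), negative entries on edges and zero off-diagonal
entries on non-edges. -/
structure CdVMatrix (G : SimpleGraph V) (M : Matrix V V ℝ) : Prop where
  herm : M.IsHermitian
  edge_neg : ∀ u v, G.Adj u v → M u v < 0
  nonedge_zero : ∀ u v, u ≠ v → ¬ G.Adj u v → M u v = 0
  one_neg : {i | herm.eigenvalues i < 0}.ncard = 1

/-- Semivalid representation of a graph: conditions (i)-(iv). -/
def Semivalid (G : SimpleGraph V) (L : Submodule ℝ (V → ℝ)) : Prop :=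
  ∀ x ∈ L, x ≠ 0 →
    ((posSupp x).Nonempty ∧ (negSupp x).Nonempty) ∧
    ((G.induce (posSupp x)).Connected ∨
      (compCount G (posSupp x) = 2 ∧ (G.induce (negSupp x)).Connected)) ∧
    ((∀ y ∈ L, y ≠ 0 → supp y ⊆ supp x → supp y = supp x) →
      (G.induce (posSupp x)).Connected ∧ (G.induce (negSupp x)).Connected) ∧
    (¬ (G.induce (posSupp x)).Connected →
      (∀ u ∈ posSupp x, ∀ v ∈ negSupp x, ¬ G.Adj u v) ∧
      (∀ C : Set V, IsComponentOf G (supp x) C → nbhd G C = nbhd G (supp x)))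

/-- The sign-pattern cone of `x` in `L` (a relatively open cone of the fan `P(L)`). -/
def signCone (L : Submodule ℝ (V → ℝ)) (x : V → ℝ) : Set (V → ℝ) :=
  {y | y ∈ L ∧ posSupp y = posSupp x ∧ negSupp y = negSupp x}

/-- The dimension of the cone of `x`, i.e. the dimension of its linear span. -/
noncomputable def coneDim (L : Submodule ℝ (V → ℝ)) (x : V → ℝ) : ℕ :=
  Module.finrank ℝ (Submodule.span ℝ (signCone L x))

/-- The graph parameter η: maximal dimension of a semivalid representation. -/
noncomputable def etaParam (G : SimpleGraph V) : ℕ :=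
  sSup {n | ∃ L : Submodule ℝ (V → ℝ), Semivalid G L ∧ Module.finrank ℝ L = n}

/-- Valid representation of a graph. -/
def Valid (G : SimpleGraph V) (X : Submodule ℝ (V → ℝ)) : Prop :=
  ∀ x ∈ X, x ≠ 0 → (G.induce (posSupp x)).Connected

/-- The graph parameter λ: maximal dimension of a valid representation. -/
noncomputable def lambdaParam (G : SimpleGraph V) : ℕ :=
  sSup {n | ∃ X : Submodule ℝ (V → ℝ), Valid G X ∧ Module.finrank ℝ X = n}

/-- The Strong Arnold hypothesis. -/
def SAH (G : SimpleGraph V) (M : Matrix V V ℝ) : Prop :=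
  ∀ X : Matrix V V ℝ, X.IsSymm → (∀ u v, (u = v ∨ G.Adj u v) → X u v = 0) →
    M * X = 0 → X = 0

/-- The Colin de Verdière parameter μ. -/
noncomputable def muParam (G : SimpleGraph V) : ℕ :=
  sSup {n | ∃ M : Matrix V V ℝ, CdVMatrix G M ∧ SAH G M ∧
    Module.finrank ℝ (LinearMap.ker M.mulVecLin) = n}

set_option linter.unusedSectionVars false
set_option linter.unusedVariables false
set_option maxHeartbeats 1000000

variable {ι : Type*}

lemma sum_dot (s : Finset ι) (f : ι → (V → ℝ)) (z : V → ℝ) :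
    (∑ i ∈ s, f i) ⬝ᵥ z = ∑ i ∈ s, f i ⬝ᵥ z := by
  simp only [dotProduct, Finset.sum_apply, Finset.sum_mul]
  exact Finset.sum_comm

lemma dot_sum (s : Finset ι) (z : V → ℝ) (f : ι → (V → ℝ)) :
    z ⬝ᵥ (∑ i ∈ s, f i) = ∑ i ∈ s, z ⬝ᵥ f i := by
  simp only [dotProduct, Finset.sum_apply, Finset.mul_sum]
  exact Finset.sum_comm

lemma mulVec_sum' (M : Matrix V V ℝ) (s : Finset ι) (f : ι → (V → ℝ)) :
    M.mulVec (∑ i ∈ s, f i) = ∑ i ∈ s, M.mulVec (f i) := by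
  have := map_sum M.mulVecLin f s
  simp only [mulVecLin_apply] at this
  exact this

section spectral
variable {M : Matrix V V ℝ} (hH : M.IsHermitian)

lemma onb_dot (i j : V) :
    (hH.eigenvectorBasis i : V → ℝ) ⬝ᵥ (hH.eigenvectorBasis j : V → ℝ) =
      if i = j then 1 else 0 := by
  have h := hH.eigenvectorBasis.orthonormal
  rcases eq_or_ne i j with rfl | hij
  · have h2 : (inner ℝ (hH.eigenvectorBasis i) (hH.eigenvectorBasis i) : ℝ) = 1 := by
      rw [real_inner_self_eq_norm_sq, h.1 i]; norm_num
    rw [PiLp.inner_apply] at h2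
    simpa [dotProduct, sq] using h2
  · have := h.2 hij
    simp only at this
    rw [PiLp.inner_apply] at this
    simpa [dotProduct, mul_comm, hij] using this

lemma onb_expand (y : V → ℝ) :
    y = ∑ i, ((hH.eigenvectorBasis i : V → ℝ) ⬝ᵥ y) • (hH.eigenvectorBasis i : V → ℝ) := by
  have h := hH.eigenvectorBasis.sum_repr (WithLp.toLp 2 y)
  funext v
  have := congrFun (congrArg (fun z : EuclideanSpace ℝ V => (z : V → ℝ)) h) v
  simp only [OrthonormalBasis.repr_apply_apply, WithLp.ofLp_toLp] at this
  rw [← this]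
  simp [Finset.sum_apply, PiLp.inner_apply, dotProduct, mul_comm]

lemma mulVec_expand (y : V → ℝ) :
    M.mulVec y = ∑ i, (hH.eigenvalues i * ((hH.eigenvectorBasis i : V → ℝ) ⬝ᵥ y)) •
      (hH.eigenvectorBasis i : V → ℝ) := by
  conv_lhs => rw [onb_expand hH y]
  rw [mulVec_sum']
  congr 1
  funext i
  rw [mulVec_smul,
    show M *ᵥ (hH.eigenvectorBasis i : V → ℝ) = hH.eigenvalues i • (hH.eigenvectorBasis i : V → ℝ)
      from hH.mulVec_eigenvectorBasis i,
    smul_smul, mul_comm]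

lemma quad_expand (y : V → ℝ) :
    y ⬝ᵥ M.mulVec y = ∑ i, hH.eigenvalues i * ((hH.eigenvectorBasis i : V → ℝ) ⬝ᵥ y)^2 := by
  rw [mulVec_expand hH y, dot_sum]
  congr 1
  funext i
  rw [dotProduct_smul, dotProduct_comm]
  simp only [smul_eq_mul]
  ring

lemma norm_expand (y : V → ℝ) :
    y ⬝ᵥ y = ∑ i, ((hH.eigenvectorBasis i : V → ℝ) ⬝ᵥ y)^2 := by
  nth_rewrite 2 [onb_expand hH y]
  rw [dot_sum]
  congr 1
  funext i
  rw [dotProduct_smul, dotProduct_comm]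
  simp only [smul_eq_mul]
  ring

end spectral

lemma closed_all {G : SimpleGraph V} (hG : G.Connected) (S : Set V)
    (hcl : ∀ v ∈ S, ∀ u, G.Adj v u → u ∈ S) {v₀ : V} (hv₀ : v₀ ∈ S) : ∀ u, u ∈ S := by
  intro u
  have key : ∀ {a b : V}, G.Walk a b → a ∈ S → b ∈ S := by
    intro a b w
    induction w with
    | nil => exact id
    | cons h p ih => intro ha; exact ih (hcl _ ha _ h)
  obtain ⟨w⟩ := hG.preconnected v₀ u
  exact key w hv₀

lemma dot_mulVec_symm {M : Matrix V V ℝ} (hs : ∀ u v, M u v = M v u) (a b : V → ℝ) :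
    a ⬝ᵥ (M *ᵥ b) = (M *ᵥ a) ⬝ᵥ b := by
  simp only [dotProduct, mulVec, Finset.mul_sum, Finset.sum_mul]
  rw [Finset.sum_comm]
  apply Finset.sum_congr rfl; intro u _
  apply Finset.sum_congr rfl; intro v _
  rw [hs u v]; ring

lemma symm_entries {M : Matrix V V ℝ} (hH : M.IsHermitian) : ∀ u v, M u v = M v u := by
  intro u v
  have := congrFun (congrFun hH.eq u) v
  simpa [conjTranspose_apply] using this.symm

lemma groundstate {G : SimpleGraph V} (hG : G.Connected) {M : Matrix V V ℝ}
    (hM : CdVMatrix G M) :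
    ∃ ψ : V → ℝ, (∀ v, 0 < ψ v) ∧
      (∀ y : V → ℝ, ψ ⬝ᵥ y = 0 → 0 ≤ y ⬝ᵥ M.mulVec y) ∧
      (∀ y : V → ℝ, ψ ⬝ᵥ y = 0 → y ⬝ᵥ M.mulVec y = 0 → M.mulVec y = 0) ∧
      (∀ y : V → ℝ, M.mulVec y = 0 → ψ ⬝ᵥ y = 0) := by
  classical
  have hH := hM.herm
  obtain ⟨i₀, hi₀⟩ := Set.ncard_eq_one.mp hM.one_neg
  set lam := hH.eigenvalues with hlamdef
  have hneg : lam i₀ < 0 := by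
    have : i₀ ∈ {i | hH.eigenvalues i < 0} := by rw [hi₀]; exact rfl
    exact this
  have hnonneg : ∀ i, i ≠ i₀ → 0 ≤ lam i := by
    intro i hi
    by_contra h
    push_neg at h
    have : i ∈ {i | hH.eigenvalues i < 0} := h
    rw [hi₀] at this
    exact hi this
  have hMoff : ∀ u v : V, u ≠ v → M u v ≤ 0 := by
    intro u v huv
    by_cases ha : G.Adj u v
    · exact le_of_lt (hM.edge_neg u v ha)
    · exact le_of_eq (hM.nonedge_zero u v huv ha)
  set ψ₀ : V → ℝ := (hH.eigenvectorBasis i₀ : V → ℝ) with hψ₀def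
  set ψ₁ : V → ℝ := fun v => |ψ₀ v| with hψ₁def
  have h00 : ψ₀ ⬝ᵥ ψ₀ = 1 := by
    have := onb_dot hH i₀ i₀; simpa using this
  have h11 : ψ₁ ⬝ᵥ ψ₁ = 1 := by
    rw [← h00]; simp [dotProduct, hψ₁def, abs_mul_abs_self]
  -- minimum principle
  have hmin : ∀ y : V → ℝ, lam i₀ * (y ⬝ᵥ y) ≤ y ⬝ᵥ M.mulVec y := by
    intro y
    rw [quad_expand hH, norm_expand hH, Finset.mul_sum]
    apply Finset.sum_le_sum
    intro i _
    rcases eq_or_ne i i₀ with rfl | hi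
    · exact le_refl _
    · have h1 := hnonneg i hi
      nlinarith [sq_nonneg ((hH.eigenvectorBasis i : V → ℝ) ⬝ᵥ y)]
  -- compare quadratic forms of ψ₁ and ψ₀
  have hq1le : ψ₁ ⬝ᵥ M.mulVec ψ₁ ≤ ψ₀ ⬝ᵥ M.mulVec ψ₀ := by
    simp only [dotProduct, mulVec, Finset.mul_sum]
    apply Finset.sum_le_sum
    intro v _
    apply Finset.sum_le_sum
    intro u _
    rcases eq_or_ne v u with rfl | hvu
    · have h := abs_mul_abs_self (ψ₀ v)
      have heq : ψ₁ v * (M v v * ψ₁ v) = ψ₀ v * (M v v * ψ₀ v) := by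
        have : ψ₁ v = |ψ₀ v| := rfl
        rw [this]
        linear_combination (M v v) * h
      exact le_of_eq heq
    · have hm := hMoff v u hvu
      have habs : ψ₀ v * ψ₀ u ≤ ψ₁ v * ψ₁ u := by
        have : ψ₁ v * ψ₁ u = |ψ₀ v * ψ₀ u| := by rw [abs_mul]
        rw [this]; exact le_abs_self _
      nlinarith [mul_le_mul_of_nonpos_left habs hm]
  have hq0 : ψ₀ ⬝ᵥ M.mulVec ψ₀ = lam i₀ := by
    rw [show M *ᵥ ψ₀ = lam i₀ • ψ₀ from hH.mulVec_eigenvectorBasis i₀, dotProduct_smul,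
      smul_eq_mul, h00, mul_one]
  have heq1 : ψ₁ ⬝ᵥ M.mulVec ψ₁ = lam i₀ := by
    have hlow := hmin ψ₁
    rw [h11, mul_one] at hlow
    rw [hq0] at hq1le
    linarith
  -- coefficients of ψ₁ vanish away from i₀
  have hc0 : ∀ i, i ≠ i₀ → (hH.eigenvectorBasis i : V → ℝ) ⬝ᵥ ψ₁ = 0 := by
    intro i hi
    have hsum : ∑ j, (lam j - lam i₀) * ((hH.eigenvectorBasis j : V → ℝ) ⬝ᵥ ψ₁)^2 = 0 := by
      have hq := quad_expand hH ψ₁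
      have hn := norm_expand hH ψ₁
      rw [heq1] at hq
      rw [h11] at hn
      have : ∑ j, (lam j - lam i₀) * ((hH.eigenvectorBasis j : V → ℝ) ⬝ᵥ ψ₁)^2
          = (∑ j, lam j * ((hH.eigenvectorBasis j : V → ℝ) ⬝ᵥ ψ₁)^2)
            - lam i₀ * ∑ j, ((hH.eigenvectorBasis j : V → ℝ) ⬝ᵥ ψ₁)^2 := by
        rw [Finset.mul_sum, ← Finset.sum_sub_distrib]
        apply Finset.sum_congr rfl
        intro j _; ring
      rw [this, ← hq, ← hn]; ring
    have hterm : ∀ j ∈ Finset.univ, (0:ℝ) ≤ (lam j - lam i₀) * ((hH.eigenvectorBasis j : V → ℝ) ⬝ᵥ ψ₁)^2 := by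
      intro j _
      rcases eq_or_ne j i₀ with rfl | hj
      · simp
      · have := hnonneg j hj
        have h2 : (0:ℝ) ≤ lam j - lam i₀ := by linarith
        exact mul_nonneg h2 (sq_nonneg _)
    have := (Finset.sum_eq_zero_iff_of_nonneg hterm).mp hsum i (Finset.mem_univ i)
    have hpos : 0 < lam i - lam i₀ := by
      have := hnonneg i hi; linarith
    rcases mul_eq_zero.mp this with h | h
    · exact absurd h hpos.ne'
    · exact pow_eq_zero_iff (two_ne_zero) |>.mp h
  -- ψ₁ is an eigenvector
  have hps : ψ₁ = ((hH.eigenvectorBasis i₀ : V → ℝ) ⬝ᵥ ψ₁) • ψ₀ := by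
    conv_lhs => rw [onb_expand hH ψ₁]
    rw [Finset.sum_eq_single i₀]
    · intro i _ hi; rw [hc0 i hi, zero_smul]
    · intro h; exact absurd (Finset.mem_univ i₀) h
  have heig1 : M.mulVec ψ₁ = lam i₀ • ψ₁ := by
    conv_lhs => rw [hps]
    rw [mulVec_smul, show M *ᵥ ψ₀ = lam i₀ • ψ₀ from hH.mulVec_eigenvectorBasis i₀]
    conv_rhs => rw [hps]
    rw [smul_comm]
  -- positivity of ψ₁
  have hnonnegψ : ∀ v, 0 ≤ ψ₁ v := fun v => abs_nonneg _
  have hψ₁pos : ∀ v, 0 < ψ₁ v := by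
    have hex : ∃ v, ψ₁ v ≠ 0 := by
      by_contra h
      push_neg at h
      rw [show ψ₁ ⬝ᵥ ψ₁ = 0 by simp [dotProduct, h]] at h11
      norm_num at h11
    obtain ⟨v₁, hv₁⟩ := hex
    set Z : Set V := {v | ψ₁ v = 0} with hZ
    have hZcl : ∀ v ∈ Z, ∀ u, G.Adj v u → u ∈ Z := by
      intro v hv u hadj
      have hrow : (M.mulVec ψ₁) v = 0 := by
        rw [heig1]; simp only [Pi.smul_apply, smul_eq_mul]
        rw [show ψ₁ v = 0 from hv, mul_zero]
      have hterms : ∀ u' ∈ Finset.univ, M v u' * ψ₁ u' ≤ 0 := by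
        intro u' _
        rcases eq_or_ne v u' with rfl | hne
        · rw [show ψ₁ v = 0 from hv, mul_zero]
        · exact mul_nonpos_of_nonpos_of_nonneg (hMoff v u' hne) (hnonnegψ u')
      have := (Finset.sum_eq_zero_iff_of_nonpos hterms).mp hrow u (Finset.mem_univ u)
      have hMvu : M v u < 0 := hM.edge_neg v u hadj
      have := mul_eq_zero.mp this
      rcases this with h | h
      · exact absurd h hMvu.ne
      · exact h
    intro v
    rcases lt_or_eq_of_le (hnonnegψ v) with h | h
    · exact h
    · exfalso
      have hvZ : v ∈ Z := h.symm
      exact hv₁ (closed_all hG Z hZcl hvZ v₁)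
  -- orthogonality transfer
  have hcψ : (hH.eigenvectorBasis i₀ : V → ℝ) ⬝ᵥ ψ₁ ≠ 0 := by
    intro h
    rw [h, zero_smul] at hps
    obtain ⟨v⟩ := hG.nonempty
    have := hψ₁pos v
    rw [hps] at this
    simp at this
  have hperp : ∀ y : V → ℝ, ψ₁ ⬝ᵥ y = 0 ↔ ψ₀ ⬝ᵥ y = 0 := by
    intro y
    conv_lhs => rw [hps]
    rw [smul_dotProduct, smul_eq_mul, mul_eq_zero]
    constructor
    · rintro (h | h)
      · exact absurd h hcψ
      · exact h
    · intro h; right; exact h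
  refine ⟨ψ₁, hψ₁pos, ?_, ?_, ?_⟩
  · intro y hy
    rw [(hperp y)] at hy
    rw [quad_expand hH]
    apply Finset.sum_nonneg
    intro i _
    rcases eq_or_ne i i₀ with rfl | hi
    · rw [show (hH.eigenvectorBasis i : V → ℝ) ⬝ᵥ y = 0 from hy]
      simp
    · have h1 : (0:ℝ) ≤ hH.eigenvalues i := hnonneg i hi
      exact mul_nonneg h1 (sq_nonneg _)
  · intro y hy hq
    rw [(hperp y)] at hy
    have hsum : ∑ i, lam i * ((hH.eigenvectorBasis i : V → ℝ) ⬝ᵥ y)^2 = 0 := by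
      rw [← quad_expand hH, hq]
    have hterm : ∀ i ∈ Finset.univ, (0:ℝ) ≤ lam i * ((hH.eigenvectorBasis i : V → ℝ) ⬝ᵥ y)^2 := by
      intro i _
      rcases eq_or_ne i i₀ with rfl | hi
      · rw [show (hH.eigenvectorBasis i : V → ℝ) ⬝ᵥ y = 0 from hy]; simp
      · have h1 : (0:ℝ) ≤ hH.eigenvalues i := hnonneg i hi
        exact mul_nonneg h1 (sq_nonneg _)
    have hzero := (Finset.sum_eq_zero_iff_of_nonneg hterm).mp hsum
    rw [mulVec_expand hH y]
    apply Finset.sum_eq_zero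
    intro i _
    rcases eq_or_ne i i₀ with rfl | hi
    · rw [show (hH.eigenvectorBasis i : V → ℝ) ⬝ᵥ y = 0 from hy, mul_zero, zero_smul]
    · have := hzero i (Finset.mem_univ i)
      rcases mul_eq_zero.mp this with h | h
      · have h' : hH.eigenvalues i = 0 := h
        rw [h', zero_mul, zero_smul]
      · rw [pow_eq_zero_iff (two_ne_zero) |>.mp h, mul_zero, zero_smul]
  · intro y hy
    have h1 : ψ₁ ⬝ᵥ (M *ᵥ y) = 0 := by rw [hy]; simp
    rw [dot_mulVec_symm (symm_entries hH), heig1, smul_dotProduct, smul_eq_mul] at h1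
    rcases mul_eq_zero.mp h1 with h | h
    · exact absurd h hneg.ne
    · exact h

/-- `C` is a union-of-components-like subset of `A`: contained in `A` and closed under
adjacency within `A`. -/
def SClosed (G : SimpleGraph V) (A C : Set V) : Prop :=
  C ⊆ A ∧ ∀ u ∈ C, ∀ w ∈ A, G.Adj u w → w ∈ C

section comb
variable {G : SimpleGraph V} {M : Matrix V V ℝ} {x : V → ℝ}

lemma mem_posSupp {v : V} : v ∈ posSupp x ↔ 0 < x v := Iff.rfl
lemma mem_negSupp {v : V} : v ∈ negSupp x ↔ x v < 0 := Iff.rfl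
lemma mem_supp {v : V} : v ∈ supp x ↔ x v ≠ 0 := Iff.rfl

lemma mulVec_apply' (M : Matrix V V ℝ) (y : V → ℝ) (v : V) :
    (M *ᵥ y) v = ∑ u, M v u * y u := rfl

lemma comp_mem (A : Set V) (K : (G.induce A).ConnectedComponent) {v : V} :
    v ∈ (Subtype.val '' K.supp) ↔
      ∃ h : v ∈ A, (G.induce A).connectedComponentMk ⟨v, h⟩ = K := by
  constructor
  · rintro ⟨⟨v', hv'⟩, hm, rfl⟩
    exact ⟨hv', (SimpleGraph.ConnectedComponent.mem_supp_iff _ _).mp hm⟩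
  · rintro ⟨h, hk⟩
    exact ⟨⟨v, h⟩, (SimpleGraph.ConnectedComponent.mem_supp_iff _ _).mpr hk, rfl⟩

lemma comp_closed (A : Set V) (K : (G.induce A).ConnectedComponent) :
    SClosed G A (Subtype.val '' K.supp) := by
  constructor
  · rintro v ⟨⟨v', hv'⟩, _, rfl⟩; exact hv'
  · intro u hu w hw hadj
    obtain ⟨h, hk⟩ := (comp_mem A K).mp hu
    refine (comp_mem A K).mpr ⟨hw, ?_⟩
    rw [← hk]
    apply SimpleGraph.ConnectedComponent.sound
    have hadj' : (G.induce A).Adj ⟨w, hw⟩ ⟨u, h⟩ := by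
      simp only [SimpleGraph.comap_adj, Function.Embedding.coe_subtype]
      exact hadj.symm
    exact hadj'.reachable

lemma comp_disjoint (A : Set V) (K K' : (G.induce A).ConnectedComponent) (hKK' : K ≠ K')
    {v : V} (h1 : v ∈ Subtype.val '' K.supp) (h2 : v ∈ Subtype.val '' K'.supp) : False := by
  obtain ⟨ha, hk⟩ := (comp_mem A K).mp h1
  obtain ⟨hb, hk'⟩ := (comp_mem A K').mp h2
  exact hKK' (hk ▸ hk' ▸ rfl)

lemma comp_nonempty (A : Set V) (K : (G.induce A).ConnectedComponent) :
    (Subtype.val '' K.supp).Nonempty := by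
  obtain ⟨a, ha⟩ := K.exists_rep
  exact ⟨a.1, (comp_mem A K).mpr ⟨a.2, ha⟩⟩

/-- If `C` is closed in `A` and `v ∈ A \ C`, the `C`-restricted vector has zero image at `v`. -/
lemma L1 (hM : CdVMatrix G M) {A C : Set V} (hcl : SClosed G A C) {v : V}
    (hvA : v ∈ A) (hvC : v ∉ C) : (M *ᵥ C.indicator x) v = 0 := by
  rw [mulVec_apply']
  apply Finset.sum_eq_zero
  intro u _
  by_cases hu : u ∈ C
  · have hne : v ≠ u := fun h => hvC (h ▸ hu)
    have hnadj : ¬ G.Adj v u := fun h => hvC (hcl.2 u hu v hvA h.symm)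
    rw [hM.nonedge_zero v u hne hnadj, zero_mul]
  · rw [Set.indicator_of_notMem hu, mul_zero]

/-- If `C` is closed in `supp x` and `v ∈ C`, the `C`-restricted vector has zero image at `v`. -/
lemma L2 (hM : CdVMatrix G M) (hker : M *ᵥ x = 0) {C : Set V}
    (hcl : SClosed G (supp x) C) {v : V} (hv : v ∈ C) :
    (M *ᵥ C.indicator x) v = 0 := by
  have h0 : ∑ u, M v u * x u = 0 := by
    have := congrFun hker v
    rwa [mulVec_apply'] at this
  rw [mulVec_apply']
  rw [show ∑ u, M v u * C.indicator x u = ∑ u, M v u * x u from ?_]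
  · exact h0
  apply Finset.sum_congr rfl
  intro u _
  by_cases hu : u ∈ C
  · rw [Set.indicator_of_mem hu]
  · rw [Set.indicator_of_notMem hu, mul_zero]
    by_cases hus : u ∈ supp x
    · have hne : v ≠ u := fun h => hu (h ▸ hv)
      have hnadj : ¬ G.Adj v u := fun h => hu (hcl.2 v hv u hus h)
      rw [hM.nonedge_zero v u hne hnadj, zero_mul]
    · rw [show x u = 0 from not_not.mp (fun h => hus h), mul_zero]

lemma L12 (hM : CdVMatrix G M) (hker : M *ᵥ x = 0) {C : Set V}
    (hcl : SClosed G (supp x) C) {v : V} (hv : v ∈ supp x) :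
    (M *ᵥ C.indicator x) v = 0 := by
  by_cases hvC : v ∈ C
  · exact L2 hM hker hcl hvC
  · exact L1 hM hcl hv hvC

lemma dot_ind_zero (hM : CdVMatrix G M) (hker : M *ᵥ x = 0) {C : Set V}
    (hcl : SClosed G (supp x) C) (z : V → ℝ) (hz : ∀ v, z v ≠ 0 → v ∈ supp x) :
    z ⬝ᵥ (M *ᵥ C.indicator x) = 0 := by
  apply Finset.sum_eq_zero
  intro v _
  by_cases hzv : z v = 0
  · rw [hzv, zero_mul]
  · rw [L12 hM hker hcl (hz v hzv), mul_zero]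

end comb

section phase1
variable {G : SimpleGraph V} {M : Matrix V V ℝ} {x : V → ℝ}

lemma offdiag_nonpos (hM : CdVMatrix G M) : ∀ u v : V, u ≠ v → M u v ≤ 0 := by
  intro u v huv
  by_cases ha : G.Adj u v
  · exact le_of_lt (hM.edge_neg u v ha)
  · exact le_of_eq (hM.nonedge_zero u v huv ha)

/-- For `C` closed in `posSupp x` and `v ∈ C`, the value `(M *ᵥ 1_C x) v` is nonpositive,
and vanishes only if `v` has no neighbours in the negative support. -/
lemma s_nonpos_P (hM : CdVMatrix G M) (hker : M *ᵥ x = 0) {C : Set V}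
    (hcl : SClosed G (posSupp x) C) {v : V} (hv : v ∈ C) :
    (M *ᵥ C.indicator x) v ≤ 0 ∧
      ((M *ᵥ C.indicator x) v = 0 → ∀ u ∈ negSupp x, ¬ G.Adj v u) := by
  have h0 : ∑ u, M v u * x u = 0 := by
    have := congrFun hker v
    rwa [mulVec_apply'] at this
  have hdecomp : (M *ᵥ C.indicator x) v = - ∑ u, M v u * (x u - C.indicator x u) := by
    rw [mulVec_apply', eq_neg_iff_add_eq_zero, ← Finset.sum_add_distrib]
    rw [show ∑ u, (M v u * C.indicator x u + M v u * (x u - C.indicator x u))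
        = ∑ u, M v u * x u from Finset.sum_congr rfl (fun u _ => by ring)]
    exact h0
  have hterm : ∀ u : V, 0 ≤ M v u * (x u - C.indicator x u) := by
    intro u
    by_cases huC : u ∈ C
    · rw [Set.indicator_of_mem huC, sub_self, mul_zero]
    · rw [Set.indicator_of_notMem huC, sub_zero]
      rcases lt_trichotomy (x u) 0 with hneg | hzero | hpos
      · have hne : v ≠ u := by
          intro h; subst h
          exact absurd (mem_posSupp.mp (hcl.1 hv)) (fun hp => lt_asymm hp hneg)
        rw [← neg_mul_neg]
        exact mul_nonneg (neg_nonneg.mpr (offdiag_nonpos hM v u hne))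
          (neg_nonneg.mpr (le_of_lt hneg))
      · rw [hzero, mul_zero]
      · -- u ∈ posSupp x \ C, so M v u = 0 by closedness
        have hne : v ≠ u := fun h => huC (h ▸ hv)
        have hnadj : ¬ G.Adj v u := fun h => huC (hcl.2 v hv u (mem_posSupp.mpr hpos) h)
        rw [hM.nonedge_zero v u hne hnadj, zero_mul]
  constructor
  · rw [hdecomp, neg_nonpos]
    exact Finset.sum_nonneg (fun u _ => hterm u)
  · intro hzero u hu hadj
    rw [hdecomp, neg_eq_zero] at hzero
    have heach := (Finset.sum_eq_zero_iff_of_nonneg (fun u _ => hterm u)).mp hzero u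
      (Finset.mem_univ u)
    have huC : u ∉ C := fun h => lt_asymm (mem_posSupp.mp (hcl.1 h)) (mem_negSupp.mp hu)
    rw [Set.indicator_of_notMem huC, sub_zero] at heach
    have hMvu : M v u < 0 := hM.edge_neg v u hadj
    have : 0 < M v u * x u := mul_pos_of_neg_of_neg hMvu (mem_negSupp.mp hu)
    rw [heach] at this
    exact lt_irrefl 0 this

lemma q_nonpos_P (hM : CdVMatrix G M) (hker : M *ᵥ x = 0) {C : Set V}
    (hcl : SClosed G (posSupp x) C) :
    (C.indicator x) ⬝ᵥ (M *ᵥ C.indicator x) ≤ 0 ∧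
      ((C.indicator x) ⬝ᵥ (M *ᵥ C.indicator x) = 0 →
        ∀ v ∈ C, (M *ᵥ C.indicator x) v = 0) := by
  have hterm : ∀ v : V, C.indicator x v * (M *ᵥ C.indicator x) v ≤ 0 := by
    intro v
    by_cases hv : v ∈ C
    · rw [Set.indicator_of_mem hv]
      exact mul_nonpos_of_nonneg_of_nonpos (le_of_lt (mem_posSupp.mp (hcl.1 hv)))
        (s_nonpos_P hM hker hcl hv).1
    · rw [Set.indicator_of_notMem hv, zero_mul]
  constructor
  · exact Finset.sum_nonpos (fun v _ => hterm v)
  · intro hq v hv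
    have heach := (Finset.sum_eq_zero_iff_of_nonpos (fun v _ => hterm v)).mp hq v
      (Finset.mem_univ v)
    rw [Set.indicator_of_mem hv] at heach
    rcases mul_eq_zero.mp heach with h | h
    · exact absurd h (ne_of_gt (mem_posSupp.mp (hcl.1 hv)))
    · exact h

lemma cross_zero_P (hM : CdVMatrix G M) {C C' : Set V} (hC : C ⊆ posSupp x)
    (hcl' : SClosed G (posSupp x) C') (hdisj : ∀ v, v ∈ C → v ∈ C' → False) :
    (C.indicator x) ⬝ᵥ (M *ᵥ C'.indicator x) = 0 := by
  apply Finset.sum_eq_zero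
  intro v _
  by_cases hv : v ∈ C
  · rw [L1 hM hcl' (hC hv) (fun h => hdisj v hv h), mul_zero]
  · rw [Set.indicator_of_notMem hv, zero_mul]

lemma d_pos {ψ : V → ℝ} (hψ : ∀ v, 0 < ψ v) {C : Set V} (hC : C ⊆ posSupp x)
    (hne : C.Nonempty) : 0 < ψ ⬝ᵥ C.indicator x := by
  obtain ⟨v₀, hv₀⟩ := hne
  apply Finset.sum_pos'
  · intro v _
    by_cases hv : v ∈ C
    · rw [Set.indicator_of_mem hv]
      exact le_of_lt (mul_pos (hψ v) (mem_posSupp.mp (hC hv)))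
    · rw [Set.indicator_of_notMem hv, mul_zero]
  · exact ⟨v₀, Finset.mem_univ v₀, by
      rw [Set.indicator_of_mem hv₀]; exact mul_pos (hψ v₀) (mem_posSupp.mp (hC hv₀))⟩

lemma d_neg {ψ : V → ℝ} (hψ : ∀ v, 0 < ψ v) {C : Set V} (hC : C ⊆ negSupp x)
    (hne : C.Nonempty) : ψ ⬝ᵥ C.indicator x < 0 := by
  obtain ⟨v₀, hv₀⟩ := hne
  apply Finset.sum_neg'
  · intro v _
    by_cases hv : v ∈ C
    · rw [Set.indicator_of_mem hv]
      exact le_of_lt (mul_neg_of_pos_of_neg (hψ v) (mem_negSupp.mp (hC hv)))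
    · rw [Set.indicator_of_notMem hv, mul_zero]
  · exact ⟨v₀, Finset.mem_univ v₀, by
      rw [Set.indicator_of_mem hv₀]; exact mul_neg_of_pos_of_neg (hψ v₀) (mem_negSupp.mp (hC hv₀))⟩

lemma supports_nonempty {ψ : V → ℝ} (hψ : ∀ v, 0 < ψ v) (hperp : ψ ⬝ᵥ x = 0)
    (hx0 : x ≠ 0) : (posSupp x).Nonempty ∧ (negSupp x).Nonempty := by
  obtain ⟨v₀, hv₀⟩ := Function.ne_iff.mp hx0
  simp only [Pi.zero_apply] at hv₀
  constructor
  · by_contra h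
    rw [Set.not_nonempty_iff_eq_empty] at h
    have hle : ∀ v, x v ≤ 0 := by
      intro v
      by_contra hc
      push_neg at hc
      have hmem : v ∈ posSupp x := mem_posSupp.mpr hc
      rw [h] at hmem
      exact hmem
    have : ψ ⬝ᵥ x < 0 := by
      have hlt : ∑ v, ψ v * x v < ∑ _v : V, (0:ℝ) := by
        apply Finset.sum_lt_sum
        · intro v _
          exact mul_nonpos_of_nonneg_of_nonpos (le_of_lt (hψ v)) (hle v)
        · refine ⟨v₀, Finset.mem_univ v₀, ?_⟩
          have : x v₀ < 0 := lt_of_le_of_ne (hle v₀) hv₀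
          exact mul_neg_of_pos_of_neg (hψ v₀) this
      simpa [dotProduct] using hlt
    exact absurd hperp (ne_of_lt this)
  · by_contra h
    rw [Set.not_nonempty_iff_eq_empty] at h
    have hle : ∀ v, 0 ≤ x v := by
      intro v
      by_contra hc
      push_neg at hc
      have hmem : v ∈ negSupp x := mem_negSupp.mpr hc
      rw [h] at hmem
      exact hmem
    have : 0 < ψ ⬝ᵥ x := by
      have hlt : ∑ _v : V, (0:ℝ) < ∑ v, ψ v * x v := by
        apply Finset.sum_lt_sum
        · intro v _
          exact mul_nonneg (le_of_lt (hψ v)) (hle v)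
        · refine ⟨v₀, Finset.mem_univ v₀, ?_⟩
          have : 0 < x v₀ := lt_of_le_of_ne (hle v₀) (Ne.symm hv₀)
          exact mul_pos (hψ v₀) this
      simpa [dotProduct] using hlt
    exact absurd hperp (ne_of_gt this)

end phase1

section phase2
variable {G : SimpleGraph V} {M : Matrix V V ℝ} {x : V → ℝ}

lemma quad_sub_expand (M : Matrix V V ℝ) (α β : ℝ) (y z : V → ℝ) :
    (α • y - β • z) ⬝ᵥ (M *ᵥ (α • y - β • z)) =
      α^2 * (y ⬝ᵥ (M *ᵥ y)) + β^2 * (z ⬝ᵥ (M *ᵥ z))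
        - α*β*(y ⬝ᵥ (M *ᵥ z)) - α*β*(z ⬝ᵥ (M *ᵥ y)) := by
  rw [mulVec_sub, mulVec_smul, mulVec_smul, sub_dotProduct, smul_dotProduct, smul_dotProduct,
    dotProduct_sub, dotProduct_sub, dotProduct_smul, dotProduct_smul, dotProduct_smul,
    dotProduct_smul]
  simp only [smul_eq_mul]
  ring

lemma no_pos_neg_edges (hM : CdVMatrix G M) (hker : M *ᵥ x = 0)
    {ψ : V → ℝ} (hψ : ∀ v, 0 < ψ v)
    (hPSD : ∀ y : V → ℝ, ψ ⬝ᵥ y = 0 → 0 ≤ y ⬝ᵥ M.mulVec y)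
    (hperpx : ψ ⬝ᵥ x = 0) (hx0 : x ≠ 0)
    (hbroken : ¬ (G.induce (posSupp x)).Connected) :
    ∀ u ∈ posSupp x, ∀ v ∈ negSupp x, ¬ G.Adj u v := by
  classical
  have hPne := supports_nonempty hψ hperpx hx0
  haveI : Nonempty ↑(posSupp x) := hPne.1.to_subtype
  obtain ⟨a, b, hnr⟩ : ∃ a b : ↑(posSupp x), ¬ (G.induce (posSupp x)).Reachable a b := by
    by_contra hcon
    push_neg at hcon
    exact hbroken ⟨fun a b => hcon a b⟩
  intro u hu v hv hadj
  set Ku := (G.induce (posSupp x)).connectedComponentMk ⟨u, hu⟩ with hKudef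
  obtain ⟨K', hK'⟩ : ∃ K' : (G.induce (posSupp x)).ConnectedComponent, K' ≠ Ku := by
    rcases eq_or_ne ((G.induce (posSupp x)).connectedComponentMk a) Ku with h | h
    · refine ⟨(G.induce (posSupp x)).connectedComponentMk b, fun hb => ?_⟩
      exact hnr (SimpleGraph.ConnectedComponent.eq.mp (h.trans hb.symm))
    · exact ⟨_, h⟩
  set C := Subtype.val '' Ku.supp with hCdef
  set C' := Subtype.val '' K'.supp with hC'def
  have hclC := comp_closed (posSupp x) Ku
  have hclC' := comp_closed (posSupp x) K'
  have hdisj : ∀ w, w ∈ C → w ∈ C' → False :=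
    fun w h1 h2 => comp_disjoint (posSupp x) Ku K' (Ne.symm hK') h1 h2
  have hneC := comp_nonempty (posSupp x) Ku
  have hneC' := comp_nonempty (posSupp x) K'
  set dC := ψ ⬝ᵥ C.indicator x with hdCdef
  set dC' := ψ ⬝ᵥ C'.indicator x with hdC'def
  have hdCpos : 0 < dC := d_pos hψ hclC.1 hneC
  have hdC'pos : 0 < dC' := d_pos hψ hclC'.1 hneC'
  set w : V → ℝ := dC' • C.indicator x - dC • C'.indicator x with hwdef
  have hperpw : ψ ⬝ᵥ w = 0 := by
    rw [hwdef, dotProduct_sub, dotProduct_smul, dotProduct_smul, ← hdCdef, ← hdC'def,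
      smul_eq_mul, smul_eq_mul]
    ring
  have hcross1 : (C.indicator x) ⬝ᵥ (M *ᵥ C'.indicator x) = 0 :=
    cross_zero_P hM hclC.1 hclC' hdisj
  have hcross2 : (C'.indicator x) ⬝ᵥ (M *ᵥ C.indicator x) = 0 :=
    cross_zero_P hM hclC'.1 hclC (fun w h1 h2 => hdisj w h2 h1)
  set qC := (C.indicator x) ⬝ᵥ (M *ᵥ C.indicator x) with hqCdef
  set qC' := (C'.indicator x) ⬝ᵥ (M *ᵥ C'.indicator x) with hqC'def
  have hqw : w ⬝ᵥ (M *ᵥ w) = dC' ^ 2 * qC + dC ^ 2 * qC' := by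
    rw [hwdef, quad_sub_expand, hcross1, hcross2, hqCdef, hqC'def]
    ring
  have hqwnn : 0 ≤ w ⬝ᵥ (M *ᵥ w) := hPSD w hperpw
  have hqCle := (q_nonpos_P hM hker hclC).1
  have hqC'le := (q_nonpos_P hM hker hclC').1
  rw [← hqCdef] at hqCle
  rw [← hqC'def] at hqC'le
  have hq0 : 0 ≤ dC' ^ 2 * qC + dC ^ 2 * qC' := by rw [← hqw]; exact hqwnn
  have hqC0 : qC = 0 := by
    refine le_antisymm hqCle ?_
    nlinarith [mul_pos hdC'pos hdC'pos,
      mul_nonpos_of_nonneg_of_nonpos (sq_nonneg dC) hqC'le]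
  have hu' : u ∈ C := (comp_mem (posSupp x) Ku).mpr ⟨hu, rfl⟩
  have hs0 := (q_nonpos_P hM hker hclC).2 (by rw [← hqCdef]; exact hqC0) u hu'
  exact (s_nonpos_P hM hker hclC hu').2 hs0 v hv hadj

lemma component_pure (hnopn : ∀ u ∈ posSupp x, ∀ v ∈ negSupp x, ¬ G.Adj u v)
    (K : (G.induce (supp x)).ConnectedComponent) :
    (Subtype.val '' K.supp ⊆ posSupp x) ∨ (Subtype.val '' K.supp ⊆ negSupp x) := by
  have onedir : ∀ a b : ↑(supp x), (G.induce (supp x)).Adj a b → 0 < x ↑a → 0 < x ↑b := by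
    intro a b hab ha
    rcases lt_trichotomy (x ↑b) 0 with h | h | h
    · have hadj : G.Adj ↑a ↑b := by
        simpa using hab
      exact absurd hadj (hnopn _ (mem_posSupp.mpr ha) _ (mem_negSupp.mpr h))
    · exact absurd h (mem_supp.mp b.2)
    · exact h
  have hreach : ∀ a b : ↑(supp x), (G.induce (supp x)).Reachable a b → 0 < x ↑a → 0 < x ↑b := by
    intro a b hr
    obtain ⟨p⟩ := hr
    induction p with
    | nil => exact id
    | cons h p ih => intro ha; exact ih (onedir _ _ h ha)
  obtain ⟨r, hrK⟩ := K.exists_rep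
  rcases lt_trichotomy (x ↑r) 0 with hneg | h0 | hpos
  · right
    rintro v hvmem
    obtain ⟨h, hk⟩ := (comp_mem _ K).mp hvmem
    have hrch : (G.induce (supp x)).Reachable ⟨v, h⟩ r :=
      SimpleGraph.ConnectedComponent.eq.mp (hk.trans hrK.symm)
    refine mem_negSupp.mpr ?_
    rcases lt_trichotomy (x v) 0 with h' | h' | h'
    · exact h'
    · exact absurd h' (mem_supp.mp h)
    · exact absurd (hreach _ _ hrch h') (fun hp => lt_asymm hp hneg)
  · exact absurd h0 (mem_supp.mp r.2)
  · left
    rintro v hvmem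
    obtain ⟨h, hk⟩ := (comp_mem _ K).mp hvmem
    have hrch : (G.induce (supp x)).Reachable r ⟨v, h⟩ :=
      SimpleGraph.ConnectedComponent.eq.mp (hrK.trans hk.symm)
    exact mem_posSupp.mpr (hreach _ _ hrch hpos)

lemma s_char (hM : CdVMatrix G M) {C : Set V} (hCs : C ⊆ supp x)
    (hpure : C ⊆ posSupp x ∨ C ⊆ negSupp x) {v : V} (hv : v ∉ supp x) :
    ((M *ᵥ C.indicator x) v = 0 ↔ ∀ u ∈ C, ¬ G.Adj v u) := by
  have hne : ∀ u ∈ C, v ≠ u := fun u hu h => hv (h ▸ hCs hu)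
  have hMvu : ∀ u ∈ C, M v u ≤ 0 := fun u hu => offdiag_nonpos hM v u (hne u hu)
  have hback : (∀ u ∈ C, ¬ G.Adj v u) → (M *ᵥ C.indicator x) v = 0 := by
    intro hno
    rw [mulVec_apply']
    apply Finset.sum_eq_zero
    intro u _
    by_cases hu : u ∈ C
    · rw [hM.nonedge_zero v u (hne u hu) (hno u hu), zero_mul]
    · rw [Set.indicator_of_notMem hu, mul_zero]
  rcases hpure with hp | hn
  · have hterm : ∀ u ∈ Finset.univ, M v u * C.indicator x u ≤ 0 := by
      intro u _
      by_cases hu : u ∈ C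
      · rw [Set.indicator_of_mem hu]
        exact mul_nonpos_of_nonpos_of_nonneg (hMvu u hu) (le_of_lt (mem_posSupp.mp (hp hu)))
      · rw [Set.indicator_of_notMem hu, mul_zero]
    refine ⟨?_, hback⟩
    intro hs u hu hadj
    rw [mulVec_apply'] at hs
    have heach := (Finset.sum_eq_zero_iff_of_nonpos hterm).mp hs u (Finset.mem_univ u)
    rw [Set.indicator_of_mem hu] at heach
    have : M v u * x u < 0 :=
      mul_neg_of_neg_of_pos (hM.edge_neg v u hadj) (mem_posSupp.mp (hp hu))
    rw [heach] at this
    exact lt_irrefl 0 this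
  · have hterm : ∀ u ∈ Finset.univ, 0 ≤ M v u * C.indicator x u := by
      intro u _
      by_cases hu : u ∈ C
      · rw [Set.indicator_of_mem hu, ← neg_mul_neg]
        exact mul_nonneg (neg_nonneg.mpr (hMvu u hu))
          (neg_nonneg.mpr (le_of_lt (mem_negSupp.mp (hn hu))))
      · rw [Set.indicator_of_notMem hu, mul_zero]
    refine ⟨?_, hback⟩
    intro hs u hu hadj
    rw [mulVec_apply'] at hs
    have heach := (Finset.sum_eq_zero_iff_of_nonneg hterm).mp hs u (Finset.mem_univ u)
    rw [Set.indicator_of_mem hu] at heach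
    have : 0 < M v u * x u :=
      mul_pos_of_neg_of_neg (hM.edge_neg v u hadj) (mem_negSupp.mp (hn hu))
    rw [heach] at this
    exact lt_irrefl 0 this

lemma two_comp_kernel (hM : CdVMatrix G M) (hker : M *ᵥ x = 0)
    {ψ : V → ℝ} (hψ : ∀ v, 0 < ψ v)
    (hkernel : ∀ y : V → ℝ, ψ ⬝ᵥ y = 0 → y ⬝ᵥ M.mulVec y = 0 → M.mulVec y = 0)
    (hnopn : ∀ u ∈ posSupp x, ∀ v ∈ negSupp x, ¬ G.Adj u v)
    (K K' : (G.induce (supp x)).ConnectedComponent) {v : V} (hv : v ∉ supp x) :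
    ((M *ᵥ (Subtype.val '' K.supp).indicator x) v = 0 ↔
      (M *ᵥ (Subtype.val '' K'.supp).indicator x) v = 0) := by
  classical
  set C := Subtype.val '' K.supp with hCdef
  set C' := Subtype.val '' K'.supp with hC'def
  have hclC := comp_closed (supp x) K
  have hclC' := comp_closed (supp x) K'
  have hneC := comp_nonempty (supp x) K
  have hneC' := comp_nonempty (supp x) K'
  have hpC := component_pure hnopn K
  have hpC' := component_pure hnopn K'
  set dC := ψ ⬝ᵥ C.indicator x with hdCdef
  set dC' := ψ ⬝ᵥ C'.indicator x with hdC'def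
  have hdC : dC ≠ 0 := by
    rcases hpC with h | h
    · exact ne_of_gt (d_pos hψ h hneC)
    · exact ne_of_lt (d_neg hψ h hneC)
  have hdC' : dC' ≠ 0 := by
    rcases hpC' with h | h
    · exact ne_of_gt (d_pos hψ h hneC')
    · exact ne_of_lt (d_neg hψ h hneC')
  set w : V → ℝ := dC' • C.indicator x - dC • C'.indicator x with hwdef
  have hwsupp : ∀ u, w u ≠ 0 → u ∈ supp x := by
    intro u hu
    by_contra hus
    apply hu
    rw [hwdef]
    have h1 : u ∉ C := fun h => hus (hclC.1 h)
    have h2 : u ∉ C' := fun h => hus (hclC'.1 h)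
    simp [Set.indicator_of_notMem h1, Set.indicator_of_notMem h2]
  have hperpw : ψ ⬝ᵥ w = 0 := by
    rw [hwdef, dotProduct_sub, dotProduct_smul, dotProduct_smul, ← hdCdef, ← hdC'def,
      smul_eq_mul, smul_eq_mul]
    ring
  have hqw : w ⬝ᵥ (M *ᵥ w) = 0 := by
    rw [hwdef, mulVec_sub, mulVec_smul, mulVec_smul, dotProduct_sub, dotProduct_smul,
      dotProduct_smul]
    rw [dot_ind_zero hM hker hclC _ hwsupp, dot_ind_zero hM hker hclC' _ hwsupp]
    simp
  have hMw : M *ᵥ w = 0 := hkernel w hperpw hqw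
  have hv0 : dC' * (M *ᵥ C.indicator x) v - dC * (M *ᵥ C'.indicator x) v = 0 := by
    have := congrFun hMw v
    rw [hwdef, mulVec_sub, mulVec_smul, mulVec_smul] at this
    simpa using this
  constructor
  · intro h
    rw [h, mul_zero, zero_sub, neg_eq_zero] at hv0
    exact (mul_eq_zero.mp hv0).resolve_left hdC
  · intro h
    rw [h, mul_zero, sub_zero] at hv0
    exact (mul_eq_zero.mp hv0).resolve_left hdC'

end phase2

/-- for `M ∈ M(G)` with `G` connected and a nonzero kernel vector `x`
with `G[supp₊(x)]` disconnected, every component `C` of `G[supp(x)]` has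
`N(C) = N(supp(x))`, and there is no edge between `supp₊(x)` and `supp₋(x)`. -/
theorem stmt17 (G : SimpleGraph V) (hG : G.Connected) (M : Matrix V V ℝ)
    (hM : CdVMatrix G M) (x : V → ℝ) (hker : M.mulVec x = 0) (hx0 : x ≠ 0)
    (hbroken : ¬ (G.induce (posSupp x)).Connected) :
    (∀ C : Set V, IsComponentOf G (supp x) C → nbhd G C = nbhd G (supp x)) ∧
    (∀ u ∈ posSupp x, ∀ v ∈ negSupp x, ¬ G.Adj u v) := by
  classical
  obtain ⟨ψ, hψpos, hPSD, hkernel, hperp⟩ := groundstate hG hM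
  have hperpx : ψ ⬝ᵥ x = 0 := hperp x hker
  have hnopn := no_pos_neg_edges hM hker hψpos hPSD hperpx hx0 hbroken
  refine ⟨?_, hnopn⟩
  rintro C ⟨K, rfl⟩
  have hclK := comp_closed (supp x) K
  ext v
  simp only [nbhd, Set.mem_setOf_eq]
  constructor
  · rintro ⟨hvC, u, huC, hadj⟩
    have hvs : v ∉ supp x := by
      intro hvs
      exact hvC (hclK.2 u huC v hvs hadj)
    exact ⟨hvs, u, hclK.1 huC, hadj⟩
  · rintro ⟨hvs, u, hus, hadj⟩
    have hvC : v ∉ Subtype.val '' K.supp := fun h => hvs (hclK.1 h)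
    refine ⟨hvC, ?_⟩
    set K' := (G.induce (supp x)).connectedComponentMk ⟨u, hus⟩ with hK'def
    have huC' : u ∈ Subtype.val '' K'.supp := (comp_mem _ K').mpr ⟨hus, rfl⟩
    by_cases hKK' : K' = K
    · exact ⟨u, hKK' ▸ huC', hadj⟩
    · have hchar' := s_char hM (comp_closed (supp x) K').1 (component_pure hnopn K')
        (v := v) hvs
      have hchar := s_char hM hclK.1 (component_pure hnopn K) (v := v) hvs
      have htrans := two_comp_kernel hM hker hψpos hkernel hnopn K K' (v := v) hvs
      have hsK' : ¬ (M *ᵥ (Subtype.val '' K'.supp).indicator x) v = 0 := by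
        intro h
        exact (hchar'.mp h) u huC' hadj.symm
      have hsK : ¬ (M *ᵥ (Subtype.val '' K.supp).indicator x) v = 0 :=
        fun h => hsK' (htrans.mp h)
      by_contra hno
      push_neg at hno
      apply hsK
      apply hchar.mpr
      intro u' hu' hadj'
      exact hno u' hu' hadj'.symm
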